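/- In the edge-labeled flip graph of the convex pentagon with labeled diagonals, the closed walk of five flips around the pentagon's flip 5-cycle returns to the same unlabeled triangulation with the two diagonal labels transposed; hence the edge-labeled flip graph of the convex pentagon is connected and has exactly 10 vertices. -/

import Mathlib

open scoped Classical

/-- `(a, b)` is a diagonal of the convex `n`-gon with vertices `0, …, n-1`
(pairs of non-adjacent vertices, written with `a < b`). -/
def IsDiag (n a b : ℕ) : Prop :=
  a < b ∧ b < n ∧ a + 2 ≤ b ∧ ¬(a = 0 ∧ b = n - 1)

/-- Two diagonals (as sorted pairs) of a convex polygon cross, i.e. their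
endpoint pairs interleave in the cyclic order. -/
def Cross (p q : ℕ × ℕ) : Prop :=
  (p.1 < q.1 ∧ q.1 < p.2 ∧ p.2 < q.2) ∨ (q.1 < p.1 ∧ p.1 < q.2 ∧ q.2 < p.2)

/-- `T` is a triangulation of the convex `n`-gon: a maximal set of pairwise
non-crossing diagonals. -/
def IsTriangulation (n : ℕ) (T : Finset (ℕ × ℕ)) : Prop :=
  (∀ p ∈ T, IsDiag n p.1 p.2) ∧
  (∀ p ∈ T, ∀ q ∈ T, p ≠ q → ¬ Cross p q) ∧
  (∀ p : ℕ × ℕ, IsDiag n p.1 p.2 → p ∉ T → ∃ q ∈ T, Cross p q)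

/-- `T'` is obtained from `T` by a single flip: one diagonal is removed and
another is inserted, the result being again a triangulation. -/
def Flip (n : ℕ) (T T' : Finset (ℕ × ℕ)) : Prop :=
  IsTriangulation n T ∧ IsTriangulation n T' ∧
  ∃ d d', d ∈ T ∧ d' ∉ T ∧ T' = insert d' (T.erase d)

/-- There is a sequence of exactly `k` flips transforming `T` into `T'`. -/
def FlipSeq (n k : ℕ) (T T' : Finset (ℕ × ℕ)) : Prop :=
  ∃ s : ℕ → Finset (ℕ × ℕ), s 0 = T ∧ s k = T' ∧ ∀ i < k, Flip n (s i) (s (i + 1))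



/-- An edge-labeled triangulation of the convex pentagon: an (unlabeled)
triangulation together with the positions of the two diagonal labels
(labels indexed by `Bool`). -/
structure LT5 where
  /-- the underlying unlabeled triangulation -/
  T : Finset (ℕ × ℕ)
  /-- the diagonal carrying each of the two labels -/
  pos : Bool → ℕ × ℕ
  tri : IsTriangulation 5 T
  mem : ∀ b, pos b ∈ T
  inj : pos true ≠ pos false

/-- A labeled flip: remove a diagonal, insert the other diagonal of the empty
quadrilateral, and transfer the removed diagonal's label to the inserted one. -/
def LFlip (X Y : LT5) : Prop :=
  ∃ d d' : ℕ × ℕ, d ∈ X.T ∧ d' ∉ X.T ∧ Y.T = insert d' (X.T.erase d) ∧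
    ∀ b, Y.pos b = if X.pos b = d then d' else X.pos b

/-- A sequence of exactly `k` labeled flips from `X` to `Y`. -/
def LFlipSeq (k : ℕ) (X Y : LT5) : Prop :=
  ∃ s : ℕ → LT5, s 0 = X ∧ s k = Y ∧ ∀ i < k, LFlip (s i) (s (i + 1))


instance Cross.dec (p q : ℕ × ℕ) : Decidable (Cross p q) := by
  unfold Cross; infer_instance

def dg : Fin 5 → ℕ × ℕ
  | 0 => (0,2) | 1 => (0,3) | 2 => (1,3) | 3 => (1,4) | 4 => (2,4)

def Dset : Finset (ℕ × ℕ) := {(0,2),(0,3),(1,3),(1,4),(2,4)}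

def Sj (j : Fin 5) : Finset (ℕ × ℕ) := {dg j, dg (j+1)}

lemma diag_mem_iff (p : ℕ × ℕ) : IsDiag 5 p.1 p.2 ↔ p ∈ Dset := by
  obtain ⟨a, b⟩ := p
  simp [IsDiag, Dset, Prod.ext_iff]
  omega

lemma tri_iff (T : Finset (ℕ × ℕ)) : IsTriangulation 5 T ↔
    (T ⊆ Dset ∧ (∀ p ∈ T, ∀ q ∈ T, p ≠ q → ¬ Cross p q) ∧
     ∀ p ∈ Dset, p ∉ T → ∃ q ∈ T, Cross p q) := by
  unfold IsTriangulation
  constructor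
  · rintro ⟨h1, h2, h3⟩
    exact ⟨fun p hp => (diag_mem_iff p).1 (h1 p hp), h2,
      fun p hp hpt => h3 p ((diag_mem_iff p).2 hp) hpt⟩
  · rintro ⟨h1, h2, h3⟩
    exact ⟨fun p hp => (diag_mem_iff p).2 (h1 hp), h2,
      fun p hp hpt => h3 p ((diag_mem_iff p).1 hp) hpt⟩

lemma tri_enum (T : Finset (ℕ × ℕ)) (h : IsTriangulation 5 T) : ∃ j : Fin 5, T = Sj j := by
  rw [tri_iff] at h
  obtain ⟨h1, h2, h3⟩ := h
  have hpow : T ∈ Dset.powerset := Finset.mem_powerset.2 h1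
  have key : ∀ T ∈ Dset.powerset,
      ((∀ p ∈ T, ∀ q ∈ T, p ≠ q → ¬ Cross p q) ∧ ∀ p ∈ Dset, p ∉ T → ∃ q ∈ T, Cross p q) →
      (T = Sj 0 ∨ T = Sj 1 ∨ T = Sj 2 ∨ T = Sj 3 ∨ T = Sj 4) := by decide
  rcases key T hpow ⟨h2, h3⟩ with h | h | h | h | h
  exacts [⟨0, h⟩, ⟨1, h⟩, ⟨2, h⟩, ⟨3, h⟩, ⟨4, h⟩]

lemma tri_Sj (j : Fin 5) : IsTriangulation 5 (Sj j) := by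
  rw [tri_iff]; fin_cases j <;> decide

lemma dg_ne (j : Fin 5) : dg j ≠ dg (j + 1) := by fin_cases j <;> decide

lemma Sj_inj : ∀ j j' : Fin 5, Sj j = Sj j' → j = j' := by decide

/-- The ten labeled triangulations: label `c` sits on `dg j`, the other label on `dg (j+1)`. -/
def g (j : Fin 5) (c : Bool) : LT5 where
  T := Sj j
  pos := fun b => if b = c then dg j else dg (j + 1)
  tri := tri_Sj j
  mem := by
    intro b
    by_cases h : b = c <;> simp [Sj, h]
  inj := by
    have h := dg_ne j
    cases c <;> simp [h, h.symm]

lemma LT5.ext' {X Y : LT5} (h1 : X.T = Y.T) (h2 : X.pos = Y.pos) : X = Y := by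
  cases X; cases Y
  dsimp at h1 h2
  subst h1; subst h2
  rfl

lemma g_surj : Function.Surjective (fun p : Fin 5 × Bool => g p.1 p.2) := by
  intro X
  obtain ⟨j, hj⟩ := tri_enum X.T X.tri
  have hne := dg_ne j
  have ht := X.mem true
  have hf := X.mem false
  rw [hj] at ht hf
  simp only [Sj, Finset.mem_insert, Finset.mem_singleton] at ht hf
  rcases ht with h1 | h1 <;> rcases hf with h2 | h2
  · exact absurd (h1.trans h2.symm) X.inj
  · refine ⟨(j, true), LT5.ext' hj.symm ?_⟩
    funext b; cases b <;> simp [g, h1, h2]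
  · refine ⟨(j, false), LT5.ext' hj.symm ?_⟩
    funext b; cases b <;> simp [g, h1, h2]
  · exact absurd (h1.trans h2.symm) X.inj

lemma g_inj : Function.Injective (fun p : Fin 5 × Bool => g p.1 p.2) := by
  rintro ⟨j, c⟩ ⟨j', c'⟩ h
  dsimp at h
  have hT : Sj j = Sj j' := congrArg LT5.T h
  have hjj : j = j' := Sj_inj j j' hT
  subst hjj
  have hp : (g j c).pos c = (g j c').pos c := congrFun (congrArg LT5.pos h) c
  simp only [g] at hp
  by_cases hc : c = c'
  · simp [hc]
  · simp [hc] at hp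
    exact absurd hp (dg_ne j)

open Fin.CommRing in
lemma lflip_step (j : Fin 5) (c : Bool) : LFlip (g j c) (g (j + 1) (!c)) := by
  refine ⟨dg j, dg (j + 2), ?_, ?_, ?_, ?_⟩
  · simp [g, Sj]
  · show dg (j + 2) ∉ Sj j
    fin_cases j <;> decide
  · show Sj (j + 1) = insert (dg (j + 2)) ((Sj j).erase (dg j))
    fin_cases j <;> decide
  · intro b
    have h1 : dg (j + 1) ≠ dg j := by
      have := dg_ne j; exact this.symm
    have h2 : j + 1 + 1 = j + 2 := by ring
    show (if b = !c then dg (j+1) else dg (j+1+1)) =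
      if (if b = c then dg j else dg (j+1)) = dg j then dg (j+2) else (if b = c then dg j else dg (j+1))
    rw [h2]
    cases b <;> cases c <;> simp [h1]

open Fin.CommRing in
lemma chain (j : Fin 5) (c : Bool) (k : ℕ) :
    Relation.ReflTransGen LFlip (g j c) (g (j + (k : Fin 5)) (if k % 2 = 0 then c else !c)) := by
  induction k with
  | zero => simpa using Relation.ReflTransGen.refl
  | succ k ih =>
    refine ih.tail ?_
    have h := lflip_step (j + (k : Fin 5)) (if k % 2 = 0 then c else !c)
    have e1 : (((k + 1 : ℕ)) : Fin 5) = (k : Fin 5) + 1 := by push_cast; ring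
    have e2 : (if (k + 1) % 2 = 0 then c else !c) = !(if k % 2 = 0 then c else !c) := by
      rcases Nat.mod_two_eq_zero_or_one k with hk | hk <;> simp [Nat.add_mod, hk]
    rw [e1, ← add_assoc] at *
    rw [e2]
    exact h

lemma fin_arith : ∀ j : Fin 5, j + 1 + 1 = j + 2 ∧ j + 2 + 1 = j + 3 ∧ j + 3 + 1 = j + 4 ∧
    j + 4 + 1 = j := by decide

lemma cycle5 (j : Fin 5) (c : Bool) : LFlipSeq 5 (g j c) (g j (!c)) := by
  obtain ⟨e1, e2, e3, e4⟩ := fin_arith j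
  refine ⟨fun i => match i with
    | 0 => g j c | 1 => g (j+1) (!c) | 2 => g (j+2) c
    | 3 => g (j+3) (!c) | 4 => g (j+4) c | _ => g j (!c), rfl, rfl, ?_⟩
  intro i hi
  interval_cases i
  · exact lflip_step j c
  · have h := lflip_step (j+1) (!c); rwa [e1, Bool.not_not] at h
  · have h := lflip_step (j+2) c; rwa [e2] at h
  · have h := lflip_step (j+3) (!c); rwa [e3, Bool.not_not] at h
  · have h := lflip_step (j+4) c; rwa [e4] at h


/-- The closed walk of five flips around the pentagon's flip 5-cycle returns to the
same unlabeled triangulation with the two diagonal labels transposed; the edge-labeled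
flip graph of the convex pentagon is connected and has exactly 10 vertices. -/
theorem pentagon_labeled_flipGraph :
    (∀ X : LT5, ∃ Y : LT5, LFlipSeq 5 X Y ∧ Y.T = X.T ∧ ∀ b, Y.pos b = X.pos (!b)) ∧
    (∀ X Y : LT5, Relation.ReflTransGen LFlip X Y) ∧
    Nat.card LT5 = 10 := by
  refine ⟨?_, ?_, ?_⟩
  · intro X
    obtain ⟨⟨j, c⟩, h⟩ := g_surj X
    dsimp at h; subst h
    refine ⟨g j (!c), cycle5 j c, rfl, ?_⟩
    intro b; cases b <;> cases c <;> rfl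
  · intro X Y
    obtain ⟨⟨j, c⟩, hX⟩ := g_surj X
    obtain ⟨⟨j', c'⟩, hY⟩ := g_surj Y
    dsimp at hX hY; subst hX; subst hY
    open Fin.CommRing in
    have key : ∀ (j j' : Fin 5) (c c' : Bool),
        ∃ k : ℕ, k < 11 ∧ j + (k : Fin 5) = j' ∧ (if k % 2 = 0 then c else !c) = c' := by decide
    obtain ⟨k, -, hk1, hk2⟩ := key j j' c c'
    have h := chain j c k
    rwa [hk1, hk2] at h
  · have hb : Function.Bijective (fun p : Fin 5 × Bool => g p.1 p.2) := ⟨g_inj, g_surj⟩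
    rw [← Nat.card_eq_of_bijective _ hb]
    simp
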